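/- Let F be a CDF with survival function S = 1 − F and mid-CDF F⋆(t) = (F(t) + F(t⁻))/2. Then for every real t, the integral over (t, ∞) of F⋆ with respect to μ_F equals (1 − F(t)²)/2; consequently, whenever S(t) > 0, (1/S(t)) · ∫_{(t,∞)} F⋆ dμ_F = 1 − S(t)/2. -/

import Mathlib

open MeasureTheory Set Filter Function

/-- For a CDF `F` (nondecreasing right-continuous with limits 0 at −∞ and 1 at +∞), with
survival function `S = 1 - F` and mid-CDF `F⋆ t = (F t + F t⁻)/2`, the integral of `F⋆`
over `(t, ∞)` w.r.t. `μ_F` equals `(1 - F t ^ 2)/2`; consequently, when `S t > 0`,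
`(1 / S t) * ∫_{(t,∞)} F⋆ dμ_F = 1 - S t / 2`. -/
theorem midCDF_integral_Ioi (F : StieltjesFunction ℝ)
    (h0 : Filter.Tendsto F Filter.atBot (nhds 0))
    (h1 : Filter.Tendsto F Filter.atTop (nhds 1)) (t : ℝ) :
    (∫ s in Set.Ioi t, (F s + Function.leftLim F s) / 2 ∂F.measure
        = (1 - F t ^ 2) / 2) ∧
    (0 < 1 - F t →
      (1 / (1 - F t)) * ∫ s in Set.Ioi t, (F s + Function.leftLim F s) / 2 ∂F.measure
        = 1 - (1 - F t) / 2) := by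
  have hmono := F.mono
  have h0le : ∀ x, 0 ≤ F x := fun x => hmono.le_of_tendsto h0 x
  have hle1 : ∀ x, F x ≤ 1 := fun x => hmono.ge_of_tendsto h1 x
  have hllle : ∀ x, leftLim F x ≤ F x := fun x => hmono.leftLim_le le_rfl
  have hll0 : ∀ x, 0 ≤ leftLim F x := fun x =>
    (h0le (x - 1)).trans (hmono.le_leftLim (by linarith))
  set μ := F.measure with hμdef
  haveI : IsProbabilityMeasure μ := F.isProbabilityMeasure h0 h1
  have hmF : Measurable F := hmono.measurable
  have hmL : Measurable (leftLim F) := hmono.leftLim.measurable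
  have hIic : ∀ x, μ (Iic x) = ENNReal.ofReal (F x) := fun x => by
    simpa using F.measure_Iic h0 x
  have hIio : ∀ x, μ (Iio x) = ENNReal.ofReal (leftLim F x) := fun x => by
    have hdiff : μ (Iic x \ {x}) = μ (Iic x) - μ {x} :=
      measure_diff (by simp) (measurableSet_singleton x).nullMeasurableSet (measure_ne_top μ _)
    have hIicd : Iic x \ {x} = Iio x := by ext y; simp [lt_iff_le_and_ne]
    rw [hIicd] at hdiff
    rw [hdiff, hIic, F.measure_singleton,
      ← ENNReal.ofReal_sub _ (sub_nonneg.2 (hllle x))]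
    congr 1; ring
  have hIoi : μ (Ioi t) = ENNReal.ofReal (1 - F t) := by
    have : Ioi t = (Iic t)ᶜ := by simp
    rw [this, prob_compl_eq_one_sub measurableSet_Iic, hIic,
      ← ENNReal.ofReal_one, ← ENNReal.ofReal_sub _ (h0le t)]
  -- product sets
  set Q : Set (ℝ × ℝ) := Ioi t ×ˢ Ioi t with hQdef
  set R : Set (ℝ × ℝ) := Ioi t ×ˢ Iic t with hRdef
  set A : Set (ℝ × ℝ) := {p | t < p.1 ∧ p.2 ≤ p.1} with hAdef
  set B : Set (ℝ × ℝ) := {p | t < p.1 ∧ p.2 < p.1} with hBdef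
  have hA : MeasurableSet A := by
    have : A = (Ioi t ×ˢ univ) ∩ {p : ℝ × ℝ | p.2 ≤ p.1} := by
      ext p; simp [hAdef, and_comm]
    rw [this]
    exact (measurableSet_Ioi.prod MeasurableSet.univ).inter
      (measurableSet_le measurable_snd measurable_fst)
  have hB : MeasurableSet B := by
    have : B = (Ioi t ×ˢ univ) ∩ {p : ℝ × ℝ | p.2 < p.1} := by
      ext p; simp [hBdef, and_comm]
    rw [this]
    exact (measurableSet_Ioi.prod MeasurableSet.univ).inter
      (measurableSet_lt measurable_snd measurable_fst)
  set L1 : ENNReal := ∫⁻ s in Ioi t, ENNReal.ofReal (F s) ∂μ with hL1def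
  set L2 : ENNReal := ∫⁻ s in Ioi t, ENNReal.ofReal (leftLim F s) ∂μ with hL2def
  have hprodA : (μ.prod μ) A = L1 := by
    rw [Measure.prod_apply hA, hL1def, ← lintegral_indicator measurableSet_Ioi _]
    congr 1; funext x
    by_cases hx : t < x
    · have hpre : Prod.mk x ⁻¹' A = Iic x := by ext y; simp [hAdef, hx]
      rw [hpre, hIic]
      exact (indicator_of_mem (mem_Ioi.mpr hx) (fun s => ENNReal.ofReal (F s))).symm
    · have hpre : Prod.mk x ⁻¹' A = ∅ := by ext y; simp [hAdef, hx]
      rw [hpre, indicator_of_notMem (fun h => hx (mem_Ioi.mp h))]; simp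
  have hprodB : (μ.prod μ) B = L2 := by
    rw [Measure.prod_apply hB, hL2def, ← lintegral_indicator measurableSet_Ioi _]
    congr 1; funext x
    by_cases hx : t < x
    · have hpre : Prod.mk x ⁻¹' B = Iio x := by ext y; simp [hBdef, hx]
      rw [hpre, hIio]
      exact (indicator_of_mem (mem_Ioi.mpr hx)
        (fun s => ENNReal.ofReal (leftLim F s))).symm
    · have hpre : Prod.mk x ⁻¹' B = ∅ := by ext y; simp [hBdef, hx]
      rw [hpre, indicator_of_notMem (fun h => hx (mem_Ioi.mp h))]; simp
  set A' : Set (ℝ × ℝ) := Q ∩ {p | p.2 ≤ p.1} with hA'def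
  set B' : Set (ℝ × ℝ) := Q ∩ {p | p.2 < p.1} with hB'def
  have hQm : MeasurableSet Q := measurableSet_Ioi.prod measurableSet_Ioi
  have hA'm : MeasurableSet A' := hQm.inter (measurableSet_le measurable_snd measurable_fst)
  have hB'm : MeasurableSet B' := hQm.inter (measurableSet_lt measurable_snd measurable_fst)
  have hAsplit : A = R ∪ A' := by
    ext p
    simp only [hAdef, hRdef, hA'def, hQdef, mem_union, mem_prod, mem_Ioi, mem_Iic,
      mem_inter_iff, mem_setOf_eq]
    constructor
    · rintro ⟨h1', h2⟩
      rcases le_or_gt p.2 t with h | h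
      · exact Or.inl ⟨h1', h⟩
      · exact Or.inr ⟨⟨h1', h⟩, h2⟩
    · rintro (⟨h1', h2⟩ | ⟨⟨h1', _⟩, h3⟩)
      · exact ⟨h1', h2.trans h1'.le⟩
      · exact ⟨h1', h3⟩
  have hBsplit : B = R ∪ B' := by
    ext p
    simp only [hBdef, hRdef, hB'def, hQdef, mem_union, mem_prod, mem_Ioi, mem_Iic,
      mem_inter_iff, mem_setOf_eq]
    constructor
    · rintro ⟨h1', h2⟩
      rcases le_or_gt p.2 t with h | h
      · exact Or.inl ⟨h1', h⟩
      · exact Or.inr ⟨⟨h1', h⟩, h2⟩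
    · rintro (⟨h1', h2⟩ | ⟨⟨h1', _⟩, h3⟩)
      · exact ⟨h1', lt_of_le_of_lt h2 h1'⟩
      · exact ⟨h1', h3⟩
  have hdRA : Disjoint R A' := by
    rw [Set.disjoint_left]
    intro p hp hq
    simp only [hRdef, hA'def, hQdef, mem_prod, mem_Ioi, mem_Iic, mem_inter_iff,
      mem_setOf_eq] at hp hq
    exact absurd hq.1.2 (not_lt.2 hp.2)
  have hdRB : Disjoint R B' := by
    rw [Set.disjoint_left]
    intro p hp hq
    simp only [hRdef, hB'def, hQdef, mem_prod, mem_Ioi, mem_Iic, mem_inter_iff,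
      mem_setOf_eq] at hp hq
    exact absurd hq.1.2 (not_lt.2 hp.2)
  have hmA : (μ.prod μ) A = (μ.prod μ) R + (μ.prod μ) A' := by
    rw [hAsplit, measure_union hdRA hA'm]
  have hmB : (μ.prod μ) B = (μ.prod μ) R + (μ.prod μ) B' := by
    rw [hBsplit, measure_union hdRB hB'm]
  -- swap symmetry
  have hswap : (μ.prod μ) (Prod.swap ⁻¹' B') = (μ.prod μ) B' := by
    rw [← Measure.map_apply measurable_swap hB'm, Measure.prod_swap]
  have hswapset : Prod.swap ⁻¹' B' = Q ∩ {p : ℝ × ℝ | p.1 < p.2} := by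
    ext p
    simp only [hB'def, hQdef, mem_preimage, mem_inter_iff, mem_prod, mem_Ioi, mem_setOf_eq,
      Prod.fst_swap, Prod.snd_swap]
    tauto
  have hQsplit : Q = A' ∪ (Q ∩ {p : ℝ × ℝ | p.1 < p.2}) := by
    ext p
    simp only [hA'def, hQdef, mem_union, mem_inter_iff, mem_prod, mem_Ioi, mem_setOf_eq]
    constructor
    · intro hp
      rcases le_or_gt p.2 p.1 with h | h
      · exact Or.inl ⟨hp, h⟩
      · exact Or.inr ⟨hp, h⟩
    · rintro (⟨hp, _⟩ | ⟨hp, _⟩) <;> exact hp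
  have hdQ : Disjoint A' (Q ∩ {p : ℝ × ℝ | p.1 < p.2}) := by
    rw [Set.disjoint_left]
    intro p hp hq
    simp only [hA'def, hQdef, mem_prod, mem_Ioi, mem_inter_iff, mem_setOf_eq] at hp hq
    exact absurd hq.2 (not_lt.2 hp.2)
  have hQmeas : (μ.prod μ) Q = (μ.prod μ) A' + (μ.prod μ) B' := by
    conv_lhs => rw [hQsplit]
    rw [measure_union hdQ (hQm.inter (measurableSet_lt measurable_fst measurable_snd)),
      ← hswapset, hswap]
  have hsum : L1 + L2 = ENNReal.ofReal (1 - F t ^ 2) := by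
    have hQval : (μ.prod μ) Q = ENNReal.ofReal (1 - F t) * ENNReal.ofReal (1 - F t) := by
      rw [hQdef, Measure.prod_prod, hIoi]
    have hRval : (μ.prod μ) R = ENNReal.ofReal (1 - F t) * ENNReal.ofReal (F t) := by
      rw [hRdef, Measure.prod_prod, hIoi, hIic]
    have h2 : L1 + L2 = 2 * ((μ.prod μ) R) + (μ.prod μ) Q := by
      rw [← hprodA, ← hprodB, hmA, hmB, hQmeas]; ring
    rw [h2, hRval, hQval, ← ENNReal.ofReal_mul (by linarith [hle1 t]),
      ← ENNReal.ofReal_mul (by linarith [hle1 t])]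
    rw [show (2 : ENNReal) = ENNReal.ofReal 2 by simp, ← ENNReal.ofReal_mul (by norm_num),
      ← ENNReal.ofReal_add (by nlinarith [h0le t, hle1 t]) (by nlinarith [h0le t, hle1 t])]
    congr 1; ring
  have hL1top : L1 ≠ ⊤ :=
    ne_top_of_le_ne_top (hsum ▸ ENNReal.ofReal_ne_top) le_self_add
  have hL2top : L2 ≠ ⊤ :=
    ne_top_of_le_ne_top (hsum ▸ ENNReal.ofReal_ne_top) le_add_self
  have hi1 : ∫ s in Ioi t, F s ∂μ = L1.toReal := by
    rw [integral_eq_lintegral_of_nonneg_ae (ae_of_all _ fun x => h0le x)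
      hmF.aestronglyMeasurable]
  have hi2 : ∫ s in Ioi t, leftLim F s ∂μ = L2.toReal := by
    rw [integral_eq_lintegral_of_nonneg_ae (ae_of_all _ fun x => hll0 x)
      hmL.aestronglyMeasurable]
  have hint1 : Integrable F (μ.restrict (Ioi t)) :=
    (integrable_const (1 : ℝ)).mono' hmF.aestronglyMeasurable
      (ae_of_all _ fun x => by
        rw [Real.norm_eq_abs, abs_of_nonneg (h0le x)]; simpa using hle1 x)
  have hint2 : Integrable (leftLim F) (μ.restrict (Ioi t)) :=
    (integrable_const (1 : ℝ)).mono' hmL.aestronglyMeasurable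
      (ae_of_all _ fun x => by
        rw [Real.norm_eq_abs, abs_of_nonneg (hll0 x)]
        simpa using (hllle x).trans (hle1 x))
  have key : ∫ s in Set.Ioi t, (F s + Function.leftLim F s) / 2 ∂F.measure
      = (1 - F t ^ 2) / 2 := by
    have h3 : ∫ s in Ioi t, (F s + leftLim F s) / 2 ∂μ
        = (∫ s in Ioi t, (F s + leftLim F s) ∂μ) / 2 := integral_div 2 _
    rw [← hμdef, h3, integral_add hint1 hint2, hi1, hi2,
      ← ENNReal.toReal_add hL1top hL2top, hsum,
      ENNReal.toReal_ofReal (by nlinarith [h0le t, hle1 t])]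
  refine ⟨key, fun hS => ?_⟩
  rw [key]
  have hne : (1 : ℝ) - F t ≠ 0 := ne_of_gt hS
  field_simp
  ring
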